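/- Let H be a finite-dimensional complex inner product space, Z ⊆ H a subspace, and K a Δ-AGSP for Z with 0 ≤ Δ. Let V ⊆ H be a subspace that is μ-overlapping onto Z for some μ ∈ (0,1]. Then for every natural number p, the subspace K^p(V) satisfies ‖P_{K^p(V)} z‖² ≥ 1 − Δ^p/μ for every unit vector z ∈ Z; in particular K^p(V) is (Δ^p/μ)-viable for Z. -/

import Mathlib

noncomputable section

open scoped InnerProductSpace

variable {H : Type*} [NormedAddCommGroup H] [InnerProductSpace ℂ H] [FiniteDimensional ℂ H]

/-- `K` is a `Δ`-AGSP for the subspace `Z`. -/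
def IsAGSP (K : H →L[ℂ] H) (Z : Submodule ℂ H) (Δ : ℝ) : Prop :=
  (∀ z ∈ Z, K z = z) ∧ (∀ w ∈ Zᗮ, K w ∈ Zᗮ) ∧ ∀ w ∈ Zᗮ, ‖K w‖ ≤ Real.sqrt Δ * ‖w‖

/-- Powers of an AGSP fix `Z` pointwise. -/
lemma agsp_pow_fix (K : H →L[ℂ] H) (Z : Submodule ℂ H)
    (h : ∀ z ∈ Z, K z = z) (n : ℕ) : ∀ z ∈ Z, (K ^ n) z = z := by
  induction n with
  | zero => intro z _; simp
  | succ n ih =>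
      intro z hz
      rw [pow_succ, ContinuousLinearMap.mul_apply, h z hz]
      exact ih z hz

/-- Powers of an AGSP preserve `Zᗮ` and shrink norms there geometrically. -/
lemma agsp_pow_shrink (K : H →L[ℂ] H) (Z : Submodule ℂ H) (Δ : ℝ)
    (h1 : ∀ w ∈ Zᗮ, K w ∈ Zᗮ) (h2 : ∀ w ∈ Zᗮ, ‖K w‖ ≤ Real.sqrt Δ * ‖w‖) (n : ℕ) :
    ∀ w ∈ Zᗮ, (K ^ n) w ∈ Zᗮ ∧ ‖(K ^ n) w‖ ≤ Real.sqrt Δ ^ n * ‖w‖ := by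
  induction n with
  | zero =>
      intro w hw
      simp only [pow_zero, ContinuousLinearMap.one_apply, one_mul]
      exact ⟨hw, le_refl _⟩
  | succ n ih =>
      intro w hw
      obtain ⟨hm, hn⟩ := ih (K w) (h1 w hw)
      rw [pow_succ, ContinuousLinearMap.mul_apply]
      refine ⟨hm, hn.trans ?_⟩
      have h3 := h2 w hw
      have h0 : (0 : ℝ) ≤ Real.sqrt Δ ^ n := pow_nonneg (Real.sqrt_nonneg Δ) n
      calc Real.sqrt Δ ^ n * ‖K w‖ ≤ Real.sqrt Δ ^ n * (Real.sqrt Δ * ‖w‖) :=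
            mul_le_mul_of_nonneg_left h3 h0
        _ = Real.sqrt Δ ^ (n + 1) * ‖w‖ := by ring

/-- Inner product with the orthogonal projection, from a vector of the subspace. -/
lemma inner_orthProj_right (S : Submodule ℂ H) (u y : H) (hy : y ∈ S) :
    ⟪y, (Submodule.orthogonalProjectionOnto S u : H)⟫_ℂ = ⟪y, u⟫_ℂ := by
  have h : u - (Submodule.orthogonalProjectionOnto S u : H) ∈ Sᗮ :=
    Submodule.sub_starProjection_mem_orthogonal (K := S) u
  have h0 : ⟪y, u - (Submodule.orthogonalProjectionOnto S u : H)⟫_ℂ = 0 :=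
    Submodule.inner_right_of_mem_orthogonal hy h
  rw [inner_sub_right, sub_eq_zero] at h0
  exact h0.symm

/-- `⟪u, P_S u⟫ = ‖P_S u‖²`. -/
lemma inner_self_orthProj (S : Submodule ℂ H) (u : H) :
    ⟪u, (Submodule.orthogonalProjectionOnto S u : H)⟫_ℂ =
      ((‖(Submodule.orthogonalProjectionOnto S u : H)‖ ^ 2 : ℝ) : ℂ) := by
  have h : u - (Submodule.orthogonalProjectionOnto S u : H) ∈ Sᗮ :=
    Submodule.sub_starProjection_mem_orthogonal (K := S) u
  have h0 : ⟪u - (Submodule.orthogonalProjectionOnto S u : H), (Submodule.orthogonalProjectionOnto S u : H)⟫_ℂ = 0 :=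
    Submodule.inner_left_of_mem_orthogonal (SetLike.coe_mem _) h
  rw [inner_sub_left, sub_eq_zero] at h0
  rw [h0, inner_self_eq_norm_sq_to_K]
  norm_cast

set_option maxHeartbeats 1000000 in
/-- Iterated error reduction: if `V` is `μ`-overlapping onto `Z` and `K` is a `Δ`-AGSP for
`Z`, then for every power `p` the subspace `K^p(V)` is `(Δ^p/μ)`-viable for `Z`. -/
theorem agsp_iterated_error_reduction (Z V : Submodule ℂ H) (K : H →L[ℂ] H) (Δ μ : ℝ)
    (hΔ : 0 ≤ Δ) (hK : IsAGSP K Z Δ) (hμ0 : 0 < μ) (hμ1 : μ ≤ 1)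
    (hV : ∀ z ∈ Z, ‖z‖ = 1 → μ ≤ ‖(Submodule.orthogonalProjectionOnto V z : H)‖ ^ 2) (p : ℕ) :
    ∀ z ∈ Z, ‖z‖ = 1 →
      1 - Δ ^ p / μ ≤ ‖(Submodule.orthogonalProjectionOnto (V.map ((K ^ p : H →L[ℂ] H) : H →ₗ[ℂ] H)) z : H)‖ ^ 2 := by
  obtain ⟨hKfix, hKmap, hKnorm⟩ := hK
  intro z hz hz1
  -- Step 0: scaled overlap bound
  have hV' : ∀ x ∈ Z, μ * ‖x‖ ^ 2 ≤ ‖(Submodule.orthogonalProjectionOnto V x : H)‖ ^ 2 := by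
    intro x hx
    rcases eq_or_ne x 0 with rfl | hx0
    · simp
    · have hnx : ‖x‖ ≠ 0 := norm_ne_zero_iff.mpr hx0
      have hnxpos : 0 < ‖x‖ := norm_pos_iff.mpr hx0
      have hmem : (‖x‖⁻¹ : ℝ) • x ∈ Z := Z.smul_of_tower_mem _ hx
      have hnorm1 : ‖(‖x‖⁻¹ : ℝ) • x‖ = 1 := by
        rw [norm_smul, Real.norm_eq_abs, abs_inv, abs_norm, inv_mul_cancel₀ hnx]
      have h2 := hV _ hmem hnorm1
      rw [ContinuousLinearMap.map_smul_of_tower] at h2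
      have hco : ((((‖x‖⁻¹ : ℝ) • Submodule.orthogonalProjectionOnto V x : V)) : H)
          = (‖x‖⁻¹ : ℝ) • (Submodule.orthogonalProjectionOnto V x : H) := rfl
      rw [hco, norm_smul, Real.norm_eq_abs, abs_inv, abs_norm] at h2
      have hinv : ‖x‖⁻¹ * ‖x‖ = 1 := inv_mul_cancel₀ hnx
      have h3 := mul_le_mul_of_nonneg_right h2 (sq_nonneg ‖x‖)
      have key : (‖x‖⁻¹ * ‖(Submodule.orthogonalProjectionOnto V x : H)‖) ^ 2 * ‖x‖ ^ 2
          = ‖(Submodule.orthogonalProjectionOnto V x : H)‖ ^ 2 := by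
        field_simp
      rw [key] at h3
      linarith
  -- Step 1: the operator T = P_Z ∘ P_V on Z is surjective
  let T : Z →ₗ[ℂ] Z :=
    ((Submodule.orthogonalProjectionOnto Z).toLinearMap.comp
      (V.subtype.comp ((Submodule.orthogonalProjectionOnto V).toLinearMap.comp Z.subtype)))
  have hTval : ∀ y : Z, ((T y : Z) : H) =
      (Submodule.orthogonalProjectionOnto Z ((Submodule.orthogonalProjectionOnto V (y : H) : H)) : H) := fun y => rfl
  have hTinner : ∀ y : Z, ⟪(y : H), ((T y : Z) : H)⟫_ℂ =
      ((‖(Submodule.orthogonalProjectionOnto V (y : H) : H)‖ ^ 2 : ℝ) : ℂ) := by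
    intro y
    rw [hTval, inner_orthProj_right Z _ _ y.2, inner_self_orthProj]
  have hTinj : Function.Injective T := by
    rw [injective_iff_map_eq_zero]
    intro y hy
    have h0 : ⟪(y : H), ((T y : Z) : H)⟫_ℂ = 0 := by rw [hy]; simp
    rw [hTinner] at h0
    have h1 : ‖(Submodule.orthogonalProjectionOnto V (y : H) : H)‖ ^ 2 = 0 := by
      exact_mod_cast h0
    have h2 := hV' (y : H) y.2
    have h3 : ‖(y : H)‖ ^ 2 = 0 := by nlinarith [sq_nonneg ‖(y : H)‖]
    have : (y : H) = 0 := by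
      rw [← norm_eq_zero]
      nlinarith [norm_nonneg (y : H)]
    exact Subtype.ext this
  have hTsurj : Function.Surjective T := LinearMap.injective_iff_surjective.mp hTinj
  obtain ⟨y, hy⟩ := hTsurj ⟨z, hz⟩
  -- Step 2: v ∈ V with P_Z v = z and ‖v‖² ≤ 1/μ
  set v : H := (Submodule.orthogonalProjectionOnto V (y : H) : H) with hv_def
  have hvV : v ∈ V := SetLike.coe_mem _
  have hPZv : (Submodule.orthogonalProjectionOnto Z v : H) = z := by
    have := congrArg (fun t : Z => (t : H)) hy
    exact this
  have hyz : ⟪(y : H), z⟫_ℂ = ((‖v‖ ^ 2 : ℝ) : ℂ) := by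
    have := hTinner y
    rw [congrArg (fun t : Z => (t : H)) hy] at this
    exact this
  have hv_le : ‖v‖ ^ 2 ≤ ‖(y : H)‖ := by
    have h1 : ‖⟪(y : H), z⟫_ℂ‖ ≤ ‖(y : H)‖ * ‖z‖ := norm_inner_le_norm _ _
    rw [hyz, hz1, mul_one] at h1
    have h2 : ‖((‖v‖ ^ 2 : ℝ) : ℂ)‖ = ‖v‖ ^ 2 := by
      rw [Complex.norm_real, Real.norm_eq_abs, abs_of_nonneg (sq_nonneg _)]
    rwa [h2] at h1
  have hy_le : μ * ‖(y : H)‖ ^ 2 ≤ ‖v‖ ^ 2 := hV' (y : H) y.2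
  have hv1μ : ‖v‖ ^ 2 ≤ 1 / μ := by
    rcases eq_or_lt_of_le (norm_nonneg (y : H)) with h | h
    · have h1 : ‖v‖ ^ 2 ≤ 0 := by rw [← h] at hv_le; exact hv_le
      have h2 : (0 : ℝ) < 1 / μ := by positivity
      linarith
    · rw [le_div_iff₀ hμ0]
      nlinarith [hv_le, hy_le, h, sq_nonneg ‖v‖,
        mul_le_mul_of_nonneg_right hv_le hμ0.le, mul_pos h h]
  -- Step 3: decompose v = z + w with w ∈ Zᗮ
  set w : H := v - z with hw_def
  have hwZ : w ∈ Zᗮ := by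
    rw [hw_def, ← hPZv]
    exact Submodule.sub_starProjection_mem_orthogonal (K := Z) v
  have hv_eq : v = z + w := by rw [hw_def]; abel
  have hzw : ⟪z, w⟫_ℂ = 0 := Submodule.inner_right_of_mem_orthogonal hz hwZ
  have hpyth : ‖v‖ ^ 2 = 1 + ‖w‖ ^ 2 := by
    rw [hv_eq, @norm_add_sq ℂ, hzw, hz1]
    simp
  -- Step 4: apply K^p
  set w' : H := (K ^ p) w with hw'_def
  obtain ⟨hw'Z, hw'norm⟩ := agsp_pow_shrink K Z Δ hKmap hKnorm p w hwZ
  have hw'sq : ‖w'‖ ^ 2 ≤ Δ ^ p * ‖w‖ ^ 2 := by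
    have h1 : ‖w'‖ ^ 2 ≤ (Real.sqrt Δ ^ p * ‖w‖) ^ 2 :=
      pow_le_pow_left₀ (norm_nonneg _) hw'norm 2
    have h2 : (Real.sqrt Δ ^ p * ‖w‖) ^ 2 = (Real.sqrt Δ ^ 2) ^ p * ‖w‖ ^ 2 := by ring
    rw [h2, Real.sq_sqrt hΔ] at h1
    exact h1
  set u : H := (K ^ p) v with hu_def
  have hu_eq : u = z + w' := by
    rw [hu_def, hv_eq, map_add, agsp_pow_fix K Z hKfix p z hz]
  have hu_mem : u ∈ V.map ((K ^ p : H →L[ℂ] H) : H →ₗ[ℂ] H) :=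
    Submodule.mem_map_of_mem (f := ((K ^ p : H →L[ℂ] H) : H →ₗ[ℂ] H)) hvV
  -- Step 5: overlap of z with K^p(V)
  set W : Submodule ℂ H := V.map ((K ^ p : H →L[ℂ] H) : H →ₗ[ℂ] H) with hW_def
  have hzw' : ⟪z, w'⟫_ℂ = 0 := Submodule.inner_right_of_mem_orthogonal hz hw'Z
  have hinner_zu : ⟪z, u⟫_ℂ = 1 := by
    rw [hu_eq, inner_add_right, hzw', inner_self_eq_norm_sq_to_K, hz1]
    simp
  have hinner_Pu : ⟪(Submodule.orthogonalProjectionOnto W z : H), u⟫_ℂ = ⟪z, u⟫_ℂ := by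
    have := inner_orthProj_right W z u hu_mem
    calc ⟪(Submodule.orthogonalProjectionOnto W z : H), u⟫_ℂ
        = starRingEnd ℂ ⟪u, (Submodule.orthogonalProjectionOnto W z : H)⟫_ℂ := by rw [inner_conj_symm]
      _ = starRingEnd ℂ ⟪u, z⟫_ℂ := by rw [this]
      _ = ⟪z, u⟫_ℂ := by rw [inner_conj_symm]
  have hPU : 1 ≤ ‖(Submodule.orthogonalProjectionOnto W z : H)‖ * ‖u‖ := by
    have h1 : ‖⟪(Submodule.orthogonalProjectionOnto W z : H), u⟫_ℂ‖ ≤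
        ‖(Submodule.orthogonalProjectionOnto W z : H)‖ * ‖u‖ := norm_inner_le_norm _ _
    rw [hinner_Pu, hinner_zu] at h1
    simpa using h1
  have hUsq : ‖u‖ ^ 2 = 1 + ‖w'‖ ^ 2 := by
    rw [hu_eq, @norm_add_sq ℂ, hzw', hz1]
    simp
  -- Step 6: conclude
  have hwsq : ‖w‖ ^ 2 ≤ 1 / μ - 1 := by linarith [hpyth, hv1μ]
  have hDp : (0 : ℝ) ≤ Δ ^ p := pow_nonneg hΔ p
  have hs_le : ‖w'‖ ^ 2 ≤ Δ ^ p / μ := by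
    have h1 : Δ ^ p * ‖w‖ ^ 2 ≤ Δ ^ p * (1 / μ - 1) :=
      mul_le_mul_of_nonneg_left hwsq hDp
    have h2 : Δ ^ p * (1 / μ) = Δ ^ p / μ := by ring
    nlinarith [hw'sq]
  have hs0 : (0 : ℝ) ≤ ‖w'‖ ^ 2 := sq_nonneg _
  have hP0 : (0 : ℝ) ≤ ‖(Submodule.orthogonalProjectionOnto W z : H)‖ := norm_nonneg _
  have hU0 : (0 : ℝ) ≤ ‖u‖ := norm_nonneg _
  have hPU2 : 1 ≤ ‖(Submodule.orthogonalProjectionOnto W z : H)‖ ^ 2 * ‖u‖ ^ 2 := by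
    nlinarith [hPU]
  rw [hUsq] at hPU2
  nlinarith [hPU2, hs0, hs_le, sq_nonneg (‖w'‖ ^ 2)]
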